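/- Let r ≥ 1, let (a_0, …, a_r) be 𝓑_r-data on a ℂ-vector space M, let β ∈ ℂ, and let N be a ℂ-subspace of M ⊗ ℂ[t] invariant under D_m for every m ∈ ℤ, where D_m are the operators of F(M, Ω(1,β)). If u = Σ_{n=0}^{l} v_n ⊗ h^n_0 ∈ N (with v_0, …, v_l ∈ M), then Σ_{n=0}^{l} (a_r² v_n) ⊗ h^n_m ∈ N for every m ∈ ℤ. -/

import Mathlib

open Polynomial TensorProduct

/-- The shift operator `f(t) ↦ f(t - m)` on `ℂ[t]`. -/
noncomputable def shiftOp (m : ℤ) : Module.End ℂ (Polynomial ℂ) :=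
  (Polynomial.aeval (Polynomial.X - Polynomial.C (m : ℂ))).toLinearMap

/-- The operator `X_m^λ : f(t) ↦ λ^m f(t - m)` of `Ω(λ,β)`. -/
noncomputable def XOp (l : ℂ) (m : ℤ) : Module.End ℂ (Polynomial ℂ) :=
  (l ^ m) • shiftOp m

/-- The operator `D_m^{λ,β} : f(t) ↦ λ^m (t - βm) f(t - m)` of `Ω(λ,β)`. -/
noncomputable def DOp (l b : ℂ) (m : ℤ) : Module.End ℂ (Polynomial ℂ) :=
  (l ^ m) • ((LinearMap.mulLeft ℂ (Polynomial.X - Polynomial.C (b * (m : ℂ)))) ∘ₗ shiftOp m)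

/-- `𝓑_r`-data on a ℂ-vector space `M`. -/
structure BrData (r : ℕ) (M : Type*) [AddCommGroup M] [Module ℂ M] where
  a : Fin (r + 1) → Module.End ℂ M
  rel : ∀ i j : Fin (r + 1), ∀ h : (i : ℕ) + (j : ℕ) ≤ r,
    a i * a j - a j * a i
      = (((j : ℕ) : ℂ) - ((i : ℕ) : ℂ)) • a ⟨(i : ℕ) + (j : ℕ), Nat.lt_succ_of_le h⟩
  comm : ∀ i j : Fin (r + 1), r < (i : ℕ) + (j : ℕ) → a i * a j = a j * a i

/-- The operator `g(m) = Σ_{i=0}^r (m^{i+1}/(i+1)!)·a_i`. -/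
noncomputable def gOp {r : ℕ} {M : Type*} [AddCommGroup M] [Module ℂ M]
    (B : BrData r M) (m : ℤ) : Module.End ℂ M :=
  ∑ i : Fin (r + 1), (((m : ℂ) ^ ((i : ℕ) + 1)) / (Nat.factorial ((i : ℕ) + 1) : ℂ)) • B.a i

/-- The operator `D_m` of the Virasoro module `F(M, Ω(λ,β)) = M ⊗ ℂ[t]`:
`D_m(v ⊗ f) = v ⊗ λ^m(t − βm)f(t − m) + g(m)v ⊗ λ^m f(t − m)`. -/
noncomputable def DF {r : ℕ} {M : Type*} [AddCommGroup M] [Module ℂ M]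
    (B : BrData r M) (l b : ℂ) (m : ℤ) : Module.End ℂ (M ⊗[ℂ] Polynomial ℂ) :=
  TensorProduct.map LinearMap.id (DOp l b m) + TensorProduct.map (gOp B m) (XOp l m)

/-- The polynomial `h^n_m = ∏_{j=m+1}^{m+n} (t − j)`, with `h^0_m = 1`. -/
noncomputable def hpoly (m : ℤ) (n : ℕ) : Polynomial ℂ :=
  ∏ j ∈ Finset.range n, (Polynomial.X - Polynomial.C ((m : ℂ) + (j : ℂ) + 1))



section extract
variable {V : Type*} [AddCommGroup V] [Module ℂ V]

lemma vandermonde_extract (N : Submodule ℂ V) (D : ℕ) (c : ℕ → V)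
    (h : ∀ k : ℤ, (∑ i ∈ Finset.range D, (k : ℂ) ^ i • c i) ∈ N) :
    ∀ i ∈ Finset.range D, c i ∈ N := by
  intro i hi
  rw [Finset.mem_range] at hi
  set A : Matrix (Fin D) (Fin D) ℂ := Matrix.vandermonde (fun j => ((j : ℕ) : ℂ)) with hA
  have hdet : IsUnit A.det := by
    rw [isUnit_iff_ne_zero, hA, Matrix.det_vandermonde_ne_zero_iff]
    intro x y hxy
    simp only [Nat.cast_inj] at hxy; exact Fin.ext hxy
  have hinv : A⁻¹ * A = 1 := Matrix.nonsing_inv_mul A hdet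
  have key : c i = ∑ j : Fin D, (A⁻¹ ⟨i, hi⟩ j) •
      (∑ i' ∈ Finset.range D, ((j : ℕ) : ℂ) ^ i' • c i') := by
    have : ∀ j : Fin D, (∑ i' ∈ Finset.range D, ((j : ℕ) : ℂ) ^ i' • c i')
        = ∑ i' : Fin D, A j i' • c i' := by
      intro j
      rw [Finset.sum_range fun i' => ((j : ℕ) : ℂ) ^ i' • c i']
      rfl
    simp_rw [this, Finset.smul_sum, smul_smul]
    rw [Finset.sum_comm]
    have : ∀ i' : Fin D, ∑ j : Fin D, (A⁻¹ ⟨i, hi⟩ j * A j i') • c i'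
        = ((A⁻¹ * A) ⟨i, hi⟩ i') • c i' := by
      intro i'
      rw [Matrix.mul_apply, Finset.sum_smul]
    simp_rw [this, hinv, Matrix.one_apply]
    simp [Finset.sum_ite_eq]
  rw [key]
  exact Submodule.sum_mem N fun j _ => Submodule.smul_mem N _ (h ((j : ℕ) : ℤ))

lemma poly_extract (N : Submodule ℂ V) {ι : Type*} (s : Finset ι)
    (φ : ι → Polynomial ℂ) (w : ι → V) (D : ℕ)
    (hdeg : ∀ α ∈ s, (φ α).natDegree ≤ D)
    (hmem : ∀ k : ℤ, (∑ α ∈ s, (φ α).eval (k : ℂ) • w α) ∈ N) (d : ℕ) :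
    (∑ α ∈ s, (φ α).coeff d • w α) ∈ N := by
  by_cases hd : d ≤ D
  · refine vandermonde_extract N (D + 1) (fun i => ∑ α ∈ s, (φ α).coeff i • w α) ?_ d
      (Finset.mem_range.mpr (Nat.lt_succ_of_le hd))
    intro k
    have : (∑ i ∈ Finset.range (D + 1), (k : ℂ) ^ i • ∑ α ∈ s, (φ α).coeff i • w α)
        = ∑ α ∈ s, (φ α).eval (k : ℂ) • w α := by
      simp_rw [Finset.smul_sum]
      rw [Finset.sum_comm]
      refine Finset.sum_congr rfl fun α hα => ?_
      rw [eval_eq_sum_range' (Nat.lt_succ_of_le (hdeg α hα)), Finset.sum_smul]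
      simp_rw [smul_smul]
      refine Finset.sum_congr rfl fun i _ => ?_
      ring_nf
    rw [this]; exact hmem k
  · have : ∀ α ∈ s, (φ α).coeff d • w α = 0 := by
      intro α hα
      rw [coeff_eq_zero_of_natDegree_lt (lt_of_le_of_lt (hdeg α hα) (not_le.mp hd)), zero_smul]
    rw [Finset.sum_congr rfl this, Finset.sum_const_zero]
    exact N.zero_mem
end extract


section ops
variable {r : ℕ} {M : Type*} [AddCommGroup M] [Module ℂ M]

/-- shift on the tensor product -/
noncomputable def shiftT (M : Type*) [AddCommGroup M] [Module ℂ M] (m : ℤ) :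
    Module.End ℂ (M ⊗[ℂ] Polynomial ℂ) :=
  TensorProduct.map LinearMap.id (shiftOp m)

/-- the coefficient operators of `D_k` as a polynomial in `k` -/
noncomputable def Cop (B : BrData r M) (b : ℂ) : ℕ → Module.End ℂ (M ⊗[ℂ] Polynomial ℂ)
  | 0 => TensorProduct.map LinearMap.id (LinearMap.mulLeft ℂ Polynomial.X)
  | (i + 1) =>
      (((Nat.factorial (i + 1) : ℂ))⁻¹ •
        TensorProduct.map (B.a ⟨min i r, Nat.lt_succ_of_le (min_le_right i r)⟩) LinearMap.id)
      + (if i = 0 then (-b) • (1 : Module.End ℂ (M ⊗[ℂ] Polynomial ℂ)) else 0)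

lemma shiftOp_apply (m : ℤ) (f : Polynomial ℂ) :
    shiftOp m f = Polynomial.aeval (Polynomial.X - Polynomial.C (m : ℂ)) f := rfl

lemma shiftOp_comp (s k : ℤ) (f : Polynomial ℂ) :
    shiftOp s (shiftOp k f) = shiftOp (s + k) f := by
  simp only [shiftOp_apply]
  rw [← Polynomial.aeval_algHom_apply]
  have h : (Polynomial.aeval (Polynomial.X - Polynomial.C (s : ℂ)))
      (Polynomial.X - Polynomial.C (k : ℂ)) = Polynomial.X - Polynomial.C ((s + k : ℤ) : ℂ) := by
    rw [map_sub, Polynomial.aeval_X, Polynomial.aeval_C]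
    push_cast [Polynomial.C_add]
    simp only [Polynomial.algebraMap_eq]
    ring
  rw [h]

lemma shiftT_comp (s k : ℤ) (x : M ⊗[ℂ] Polynomial ℂ) :
    shiftT M s (shiftT M k x) = shiftT M (s + k) x := by
  induction x with
  | zero => simp
  | tmul v f => simp [shiftT, shiftOp_comp]
  | add x y hx hy => simp [map_add, hx, hy]

lemma shiftOp_hpoly (s m : ℤ) (n : ℕ) : shiftOp s (hpoly m n) = hpoly (m + s) n := by
  simp only [shiftOp_apply, hpoly, map_prod, map_sub, Polynomial.aeval_X, Polynomial.aeval_C]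
  refine Finset.prod_congr rfl fun j _ => ?_
  push_cast [Polynomial.C_add, Polynomial.C_1]
  simp only [map_intCast, map_natCast]
  ring

set_option maxHeartbeats 1000000 in
/-- Expansion of `D_k` as polynomial in `k` with operator coefficients. -/
lemma DF_expand (B : BrData r M) (b : ℂ) (k : ℤ) (x : M ⊗[ℂ] Polynomial ℂ) :
    DF B 1 b k x = ∑ j ∈ Finset.range (r + 2), (k : ℂ) ^ j • Cop B b j (shiftT M k x) := by
  induction x with
  | zero => simp
  | add x y hx hy => simp only [map_add, hx, hy, smul_add, Finset.sum_add_distrib]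
  | tmul v f =>
    simp only [DF, LinearMap.add_apply, TensorProduct.map_tmul, DOp, XOp, one_zpow, one_smul,
      LinearMap.smul_apply, LinearMap.comp_apply, LinearMap.id_apply, LinearMap.mulLeft_apply]
    rw [Finset.sum_range_succ' _ (r + 1)]
    simp only [Cop, shiftT, TensorProduct.map_tmul, LinearMap.id_apply, pow_zero, one_smul]
    have hbody : ∀ x ∈ Finset.range (r + 1),
        (k : ℂ) ^ (x + 1) •
          ((((x + 1).factorial : ℂ))⁻¹ •
              TensorProduct.map (B.a ⟨min x r, Nat.lt_succ_of_le (min_le_right x r)⟩)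
                LinearMap.id
            + if x = 0 then (-b) • (1 : Module.End ℂ (M ⊗[ℂ] Polynomial ℂ)) else 0
            : Module.End ℂ (M ⊗[ℂ] Polynomial ℂ)) (v ⊗ₜ[ℂ] shiftOp k f)
          = (k : ℂ) ^ (x + 1) • (((x + 1).factorial : ℂ))⁻¹ •
              ((B.a ⟨min x r, Nat.lt_succ_of_le (min_le_right x r)⟩) v ⊗ₜ[ℂ] shiftOp k f)
            + (if x = 0 then (-(b * (k : ℂ))) • (v ⊗ₜ[ℂ] shiftOp k f) else 0) := by
      intro x hx
      rcases eq_or_ne x 0 with h0 | h0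
      · subst h0
        simp only [if_true, eq_self_iff_true, LinearMap.add_apply, LinearMap.smul_apply,
          TensorProduct.map_tmul, LinearMap.id_apply, Module.End.one_apply, smul_add, pow_one]
        module
      · simp only [if_neg h0, LinearMap.add_apply, LinearMap.smul_apply, add_zero,
          TensorProduct.map_tmul, LinearMap.id_apply, LinearMap.zero_apply, smul_add, smul_zero]
    rw [Finset.sum_congr rfl hbody, Finset.sum_add_distrib, Finset.sum_ite_eq' (Finset.range (r + 1)) 0,
      if_pos (Finset.mem_range.mpr (Nat.succ_pos r))]
    have hg : (gOp B k) v ⊗ₜ[ℂ] shiftOp k f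
        = ∑ x ∈ Finset.range (r + 1), (k : ℂ) ^ (x + 1) • (((x + 1).factorial : ℂ))⁻¹ •
            ((B.a ⟨min x r, Nat.lt_succ_of_le (min_le_right x r)⟩) v ⊗ₜ[ℂ] shiftOp k f) := by
      rw [gOp, LinearMap.sum_apply, TensorProduct.sum_tmul,
        ← Fin.sum_univ_eq_sum_range (fun x => (k : ℂ) ^ (x + 1) • (((x + 1).factorial : ℂ))⁻¹ •
            ((B.a ⟨min x r, Nat.lt_succ_of_le (min_le_right x r)⟩) v ⊗ₜ[ℂ] shiftOp k f))]
      refine Finset.sum_congr rfl fun i _ => ?_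
      have hmin : (⟨min (i : ℕ) r, Nat.lt_succ_of_le (min_le_right (i : ℕ) r)⟩ : Fin (r + 1)) = i :=
        Fin.ext (min_eq_left (Nat.lt_succ_iff.mp i.isLt))
      rw [hmin, LinearMap.smul_apply, smul_smul, TensorProduct.smul_tmul', div_eq_mul_inv]
    rw [hg]
    have hmul : v ⊗ₜ[ℂ] ((Polynomial.X - Polynomial.C (b * (k : ℂ))) * shiftOp k f)
        = v ⊗ₜ[ℂ] (Polynomial.X * shiftOp k f) - (b * (k : ℂ)) • (v ⊗ₜ[ℂ] shiftOp k f) := by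
      rw [sub_mul, TensorProduct.tmul_sub, ← Polynomial.smul_eq_C_mul, TensorProduct.tmul_smul]
    rw [hmul, LinearMap.mulLeft_apply]
    module

lemma shiftOp_mulX (s : ℤ) (f : Polynomial ℂ) :
    shiftOp s (Polynomial.X * f)
      = Polynomial.X * shiftOp s f - (s : ℂ) • shiftOp s f := by
  simp only [shiftOp_apply, map_mul, Polynomial.aeval_X]
  rw [sub_mul, Polynomial.smul_eq_C_mul]

lemma shiftT_Cop (B : BrData r M) (b : ℂ) (s : ℤ) (j : ℕ) (x : M ⊗[ℂ] Polynomial ℂ) :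
    shiftT M s (Cop B b j x)
      = Cop B b j (shiftT M s x) - (if j = 0 then (s : ℂ) • shiftT M s x else 0) := by
  induction x with
  | zero => simp
  | add x y hx hy =>
    simp only [map_add, hx, hy]
    rcases eq_or_ne j 0 with h | h <;> simp [h, smul_add] <;> abel
  | tmul v f =>
    cases j with
    | zero =>
      simp only [Cop, shiftT, TensorProduct.map_tmul, LinearMap.id_apply,
        LinearMap.mulLeft_apply, if_pos rfl, shiftOp_mulX, TensorProduct.tmul_sub,
        TensorProduct.tmul_smul, if_true]
    | succ i =>
      simp only [Cop, if_neg (Nat.succ_ne_zero i), sub_zero, LinearMap.add_apply,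
        LinearMap.smul_apply, TensorProduct.map_tmul, LinearMap.id_apply, map_add, map_smul,
        shiftT]
      congr 1
      rcases eq_or_ne i 0 with h | h <;>
        simp [h, TensorProduct.map_tmul]

end ops

lemma natDegree_CsubX_pow (a : ℂ) (i : ℕ) :
    ((Polynomial.C a - Polynomial.X) ^ i).natDegree = i := by
  have h : Polynomial.C a - Polynomial.X = -(Polynomial.X - Polynomial.C a) := by ring
  rw [h, Polynomial.natDegree_pow, Polynomial.natDegree_neg, Polynomial.natDegree_X_sub_C,
    mul_one]

lemma coeff_CsubX_pow_self (a : ℂ) (i : ℕ) :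
    ((Polynomial.C a - Polynomial.X) ^ i).coeff i = (-1 : ℂ) ^ i := by
  have h : (Polynomial.C a - Polynomial.X) ^ i
      = Polynomial.C ((-1 : ℂ) ^ i) * (Polynomial.X - Polynomial.C a) ^ i := by
    rw [map_pow, map_neg, map_one, ← neg_pow, neg_sub]
  rw [h, Polynomial.coeff_C_mul]
  have hdeg : ((Polynomial.X - Polynomial.C a) ^ i).natDegree = i := by
    rw [Polynomial.natDegree_pow, Polynomial.natDegree_X_sub_C, mul_one]
  have hm : ((Polynomial.X - Polynomial.C a) ^ i).coeff i = 1 := by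
    have h1 := ((Polynomial.monic_X_sub_C a).pow i).coeff_natDegree
    rwa [hdeg] at h1
  rw [hm, mul_one]


set_option maxHeartbeats 2000000 in
/-- Claim 1: if `N ⊆ M ⊗ ℂ[t]` is invariant under all operators of
`F(M, Ω(1,β))` and `u = Σ_{n=0}^{l} v_n ⊗ h^n_0 ∈ N`, then
`Σ_{n=0}^{l} (a_r² v_n) ⊗ h^n_m ∈ N` for every `m ∈ ℤ`. -/
theorem claim1 {r : ℕ} (hr : 1 ≤ r) {M : Type*} [AddCommGroup M] [Module ℂ M]
    (B : BrData r M) (b : ℂ)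
    (N : Submodule ℂ (M ⊗[ℂ] Polynomial ℂ))
    (hN : ∀ m : ℤ, ∀ u ∈ N, DF B 1 b m u ∈ N)
    (L : ℕ) (v : ℕ → M)
    (hu : (∑ n ∈ Finset.range (L + 1), v n ⊗ₜ[ℂ] hpoly 0 n) ∈ N) :
    ∀ m : ℤ,
      (∑ n ∈ Finset.range (L + 1),
        ((B.a (Fin.last r) ^ 2) (v n)) ⊗ₜ[ℂ] hpoly m n) ∈ N := by
  intro m
  classical
  set u0 : M ⊗[ℂ] Polynomial ℂ := ∑ n ∈ Finset.range (L + 1), v n ⊗ₜ[ℂ] hpoly 0 n with hu0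
  set um : M ⊗[ℂ] Polynomial ℂ := ∑ n ∈ Finset.range (L + 1), v n ⊗ₜ[ℂ] hpoly m n with humdef
  have hum : shiftT M m u0 = um := by
    rw [hu0, map_sum, humdef]
    refine Finset.sum_congr rfl fun n _ => ?_
    rw [shiftT, TensorProduct.map_tmul, LinearMap.id_apply, shiftOp_hpoly, zero_add]
  set sIdx : Finset ((ℕ × ℕ) ⊕ ℕ) :=
    (Finset.range (r + 2) ×ˢ Finset.range (r + 2)).disjSum (Finset.range (r + 2)) with hsIdx
  set φ : (ℕ × ℕ) ⊕ ℕ → Polynomial ℂ :=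
    Sum.elim (fun p => (Polynomial.C (m : ℂ) - Polynomial.X) ^ p.1 * Polynomial.X ^ p.2)
      (fun i => -((Polynomial.C (m : ℂ) - Polynomial.X) ^ (i + 1))) with hφ
  set w : (ℕ × ℕ) ⊕ ℕ → M ⊗[ℂ] Polynomial ℂ :=
    Sum.elim (fun p => Cop B b p.1 (Cop B b p.2 um)) (fun i => Cop B b i um) with hw
  have hdeg : ∀ α ∈ sIdx, (φ α).natDegree ≤ 2 * r + 2 := by
    rintro (p | i) hα
    · have hp := Finset.mem_product.mp (Finset.inl_mem_disjSum.mp hα)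
      have h1 := Finset.mem_range.mp hp.1
      have h2 := Finset.mem_range.mp hp.2
      simp only [hφ, Sum.elim_inl]
      refine le_trans (Polynomial.natDegree_mul_le) ?_
      rw [natDegree_CsubX_pow, Polynomial.natDegree_X_pow]
      omega
    · have hi := Finset.mem_range.mp (Finset.inr_mem_disjSum.mp hα)
      simp only [hφ, Sum.elim_inr, Polynomial.natDegree_neg, natDegree_CsubX_pow]
      omega
  have hcast : ∀ k : ℤ, ((m - k : ℤ) : ℂ) = (m : ℂ) - (k : ℂ) := by intro k; push_cast; ring
  have hmem : ∀ k : ℤ, (∑ α ∈ sIdx, (φ α).eval (k : ℂ) • w α) ∈ N := by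
    intro k
    have hEk : (∑ α ∈ sIdx, (φ α).eval (k : ℂ) • w α) = DF B 1 b (m - k) (DF B 1 b k u0) := by
      rw [DF_expand B b k u0, DF_expand B b (m - k)]
      have h2 : shiftT M (m - k)
          (∑ j ∈ Finset.range (r + 2), (k : ℂ) ^ j • Cop B b j (shiftT M k u0))
          = ∑ j ∈ Finset.range (r + 2), (k : ℂ) ^ j •
              (Cop B b j um - (if j = 0 then ((m : ℂ) - (k : ℂ)) • um else 0)) := by
        rw [map_sum]
        refine Finset.sum_congr rfl fun j _ => ?_
        rw [map_smul, shiftT_Cop, shiftT_comp]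
        have hmk : m - k + k = m := by ring
        rw [hmk, hum, hcast]
      rw [h2]
      have h3 : ∀ i ∈ Finset.range (r + 2),
          ((m - k : ℤ) : ℂ) ^ i • Cop B b i (∑ j ∈ Finset.range (r + 2), (k : ℂ) ^ j •
              (Cop B b j um - (if j = 0 then ((m : ℂ) - (k : ℂ)) • um else 0)))
          = (∑ j ∈ Finset.range (r + 2),
              (((m : ℂ) - (k : ℂ)) ^ i * (k : ℂ) ^ j) • Cop B b i (Cop B b j um))
            - ((m : ℂ) - (k : ℂ)) ^ (i + 1) • Cop B b i um := by
        intro i _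
        rw [map_sum, Finset.smul_sum]
        have hterm : ∀ j ∈ Finset.range (r + 2),
            ((m - k : ℤ) : ℂ) ^ i • Cop B b i ((k : ℂ) ^ j •
              (Cop B b j um - (if j = 0 then ((m : ℂ) - (k : ℂ)) • um else 0)))
            = (((m : ℂ) - (k : ℂ)) ^ i * (k : ℂ) ^ j) • Cop B b i (Cop B b j um)
              - (if j = 0 then ((m : ℂ) - (k : ℂ)) ^ (i + 1) • Cop B b i um else 0) := by
          intro j _
          rw [map_smul, map_sub, hcast]
          rcases eq_or_ne j 0 with h | h
          · subst h
            simp only [eq_self_iff_true, if_true, pow_zero, mul_one, map_smul, smul_sub,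
              smul_smul]
            rw [pow_succ]
            module
          · simp only [if_neg h, map_zero, sub_zero, smul_smul]
        rw [Finset.sum_congr rfl hterm, Finset.sum_sub_distrib,
          Finset.sum_ite_eq' (Finset.range (r + 2)) 0, if_pos (Finset.mem_range.mpr (by omega))]
      rw [Finset.sum_congr rfl h3, Finset.sum_sub_distrib, hsIdx, Finset.sum_disjSum,
        sub_eq_add_neg, ← Finset.sum_neg_distrib]
      congr 1
      · rw [Finset.sum_product]
        refine Finset.sum_congr rfl fun i _ => Finset.sum_congr rfl fun j _ => ?_
        simp only [hφ, hw, Sum.elim_inl, Polynomial.eval_mul, Polynomial.eval_pow,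
          Polynomial.eval_sub, Polynomial.eval_C, Polynomial.eval_X]
      · refine Finset.sum_congr rfl fun i _ => ?_
        simp only [hφ, hw, Sum.elim_inr, Polynomial.eval_neg, Polynomial.eval_pow,
          Polynomial.eval_sub, Polynomial.eval_C, Polynomial.eval_X]
        module
    rw [hEk]
    exact hN _ _ (hN _ _ hu)
  have hco := poly_extract N sIdx φ w (2 * r + 2) hdeg hmem (2 * r + 2)
  have hCop2 : Cop B b (r + 1) (Cop B b (r + 1) um)
      = ((((r + 1).factorial : ℂ))⁻¹ * (((r + 1).factorial : ℂ))⁻¹) •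
          ∑ n ∈ Finset.range (L + 1), ((B.a (Fin.last r) ^ 2) (v n)) ⊗ₜ[ℂ] hpoly m n := by
    have hne : r ≠ 0 := by omega
    have hfin : (⟨min r r, Nat.lt_succ_of_le (min_le_right r r)⟩ : Fin (r + 1)) = Fin.last r :=
      Fin.ext (by simp [Fin.last])
    have hC : ∀ x : M ⊗[ℂ] Polynomial ℂ, Cop B b (r + 1) x
        = (((r + 1).factorial : ℂ))⁻¹ • TensorProduct.map (B.a (Fin.last r)) LinearMap.id x := by
      intro x
      show (Cop B b (r + 1)) x = _
      simp only [Cop, if_neg hne, add_zero, LinearMap.smul_apply, hfin]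
    rw [hC, hC, map_smul, smul_smul, humdef, map_sum, map_sum]
    rw [Finset.smul_sum, Finset.smul_sum]
    refine Finset.sum_congr rfl fun n _ => ?_
    rw [TensorProduct.map_tmul, TensorProduct.map_tmul, LinearMap.id_apply, LinearMap.id_apply]
    congr 2
  have hcoeff : (∑ α ∈ sIdx, (φ α).coeff (2 * r + 2) • w α)
      = ((-1 : ℂ) ^ (r + 1) * ((((r + 1).factorial : ℂ))⁻¹ * (((r + 1).factorial : ℂ))⁻¹)) •
        (∑ n ∈ Finset.range (L + 1), ((B.a (Fin.last r) ^ 2) (v n)) ⊗ₜ[ℂ] hpoly m n) := by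
    rw [hsIdx, Finset.sum_disjSum]
    have hzero2 : ∀ i ∈ Finset.range (r + 2),
        ((φ (Sum.inr i)).coeff (2 * r + 2)) • w (Sum.inr i) = 0 := by
      intro i hi
      have hi' := Finset.mem_range.mp hi
      have hlt : (φ (Sum.inr i)).natDegree < 2 * r + 2 := by
        simp only [hφ, Sum.elim_inr, Polynomial.natDegree_neg, natDegree_CsubX_pow]
        omega
      rw [Polynomial.coeff_eq_zero_of_natDegree_lt hlt, zero_smul]
    rw [Finset.sum_congr rfl hzero2, Finset.sum_const_zero, add_zero]
    have hmem11 : ((r + 1, r + 1) : ℕ × ℕ) ∈ Finset.range (r + 2) ×ˢ Finset.range (r + 2) :=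
      Finset.mem_product.mpr ⟨Finset.mem_range.mpr (by omega), Finset.mem_range.mpr (by omega)⟩
    rw [Finset.sum_eq_single ((r + 1, r + 1) : ℕ × ℕ)]
    · simp only [hφ, hw, Sum.elim_inl]
      rw [Polynomial.coeff_mul_X_pow', if_pos (by omega)]
      have h22 : 2 * r + 2 - (r + 1) = r + 1 := by omega
      rw [h22, coeff_CsubX_pow_self, hCop2, smul_smul]
    · intro p hp hne
      have hp' := Finset.mem_product.mp hp
      have h1 := Finset.mem_range.mp hp'.1
      have h2 := Finset.mem_range.mp hp'.2
      simp only [hφ, hw, Sum.elim_inl]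
      rw [Polynomial.coeff_mul_X_pow']
      rcases le_or_gt p.2 (2 * r + 2) with hle | hlt
      · rw [if_pos hle, Polynomial.coeff_eq_zero_of_natDegree_lt, zero_smul]
        rw [natDegree_CsubX_pow]
        have hnep : p.1 ≠ r + 1 ∨ p.2 ≠ r + 1 := by
          by_contra hcon
          push_neg at hcon
          exact hne (Prod.ext hcon.1 hcon.2)
        omega
      · rw [if_neg (not_le.mpr hlt), zero_smul]
    · intro h; exact absurd hmem11 h
  rw [hcoeff] at hco
  have hc0 : ((-1 : ℂ) ^ (r + 1) * ((((r + 1).factorial : ℂ))⁻¹ * (((r + 1).factorial : ℂ))⁻¹))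
      ≠ 0 := by
    have hf : (((r + 1).factorial : ℂ)) ≠ 0 := Nat.cast_ne_zero.mpr (Nat.factorial_ne_zero _)
    exact mul_ne_zero (pow_ne_zero _ (by norm_num)) (mul_ne_zero (inv_ne_zero hf) (inv_ne_zero hf))
  have hfin := N.smul_mem
    (((-1 : ℂ) ^ (r + 1) * ((((r + 1).factorial : ℂ))⁻¹ * (((r + 1).factorial : ℂ))⁻¹))⁻¹) hco
  rwa [smul_smul, inv_mul_cancel₀ hc0, one_smul] at hfin
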